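/- Let $C \in \mathbb{R}^{M\times N}$ and $(\phi,\psi) \in D(C) \cap \{\phi_1 = 0\}$. If the bipartite equality graph $G(\phi,\psi)$ (edge $(i,j)$ iff $\phi_i + \psi_j = C_{ij}$) is disconnected, then $(\phi,\psi)$ is not an extreme point of $D(C) \cap \{\phi_1 = 0\}$. -/

import Mathlib

/-- The dual transport polyhedron `D(C)`. -/
def dualPolyhedron {M N : ℕ} (C : Matrix (Fin M) (Fin N) ℝ) :
    Set ((Fin M → ℝ) × (Fin N → ℝ)) :=
  {p | ∀ i j, p.1 i + p.2 j ≤ C i j}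

/-- The relation generating the bipartite equality graph `G(φ, ψ)`: an edge between
`i` and `j` iff the constraint `φ i + ψ j ≤ C i j` is tight. -/
def eqRel {M N : ℕ} (C : Matrix (Fin M) (Fin N) ℝ) (φ : Fin M → ℝ) (ψ : Fin N → ℝ) :
    (Fin M ⊕ Fin N) → (Fin M ⊕ Fin N) → Prop
  | Sum.inl i, Sum.inr j => φ i + ψ j = C i j
  | _, _ => False

/-- If the equality graph `G(φ, ψ)` is disconnected, then `(φ, ψ)` is not an extreme point
of `D(C) ∩ {φ₁ = 0}`. -/
theorem not_extreme_of_disconnected_eqGraph {M N : ℕ} [NeZero M]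
    (C : Matrix (Fin M) (Fin N) ℝ) (φ : Fin M → ℝ) (ψ : Fin N → ℝ)
    (hmem : (φ, ψ) ∈ dualPolyhedron C) (h0 : φ 0 = 0)
    (hdisc : ¬ (SimpleGraph.fromRel (eqRel C φ ψ)).Connected) :
    (φ, ψ) ∉ (dualPolyhedron C ∩ {p | p.1 0 = 0}).extremePoints ℝ := by
  classical
  set G := SimpleGraph.fromRel (eqRel C φ ψ) with hG
  set Reach : (Fin M ⊕ Fin N) → Prop := fun v => G.Reachable (Sum.inl 0) v with hReach
  -- there is an unreachable vertex
  have hex : ∃ v, ¬ Reach v := by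
    by_contra h
    push_neg at h
    have : Nonempty (Fin M ⊕ Fin N) := ⟨Sum.inl 0⟩
    exact hdisc ⟨fun u v => (h u).symm.trans (h v)⟩
  -- mixed pairs have positive slack
  have hmixed : ∀ i j, (Reach (Sum.inl i) ↔ ¬ Reach (Sum.inr j)) →
      φ i + ψ j < C i j := by
    intro i j hij
    rcases lt_or_eq_of_le (hmem i j) with h | h
    · exact h
    · exfalso
      have hadj : G.Adj (Sum.inl i) (Sum.inr j) := by
        rw [hG, SimpleGraph.fromRel_adj]
        exact ⟨by simp, Or.inl h⟩
      rcases Classical.em (Reach (Sum.inl i)) with hr | hr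
      · exact (hij.mp hr) (hr.trans hadj.reachable)
      · have hj : Reach (Sum.inr j) := by tauto
        exact hr (hj.trans hadj.symm.reachable)
  -- the slack
  set mixedS : Finset (Fin M × Fin N) :=
    Finset.univ.filter (fun p => (Reach (Sum.inl p.1) ↔ ¬ Reach (Sum.inr p.2))) with hmS
  set S : Finset ℝ := insert 1 (mixedS.image fun p => C p.1 p.2 - φ p.1 - ψ p.2) with hS
  have hSne : S.Nonempty := ⟨1, Finset.mem_insert_self _ _⟩
  set ε : ℝ := S.min' hSne with hε
  have hεpos : 0 < ε := by
    apply (S.lt_min'_iff hSne).mpr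
    intro y hy
    rcases Finset.mem_insert.mp hy with rfl | hy
    · norm_num
    · obtain ⟨p, hp, rfl⟩ := Finset.mem_image.mp hy
      have := hmixed p.1 p.2 (Finset.mem_filter.mp hp).2
      linarith
  have hεle : ∀ i j, (Reach (Sum.inl i) ↔ ¬ Reach (Sum.inr j)) → ε ≤ C i j - φ i - ψ j := by
    intro i j h
    exact S.min'_le _ (Finset.mem_insert_of_mem (Finset.mem_image.mpr
      ⟨(i, j), Finset.mem_filter.mpr ⟨Finset.mem_univ _, h⟩, rfl⟩))
  -- the two perturbed points
  set x₁ : (Fin M → ℝ) × (Fin N → ℝ) :=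
    (fun i => φ i - if Reach (Sum.inl i) then 0 else ε,
     fun j => ψ j + if Reach (Sum.inr j) then 0 else ε) with hx₁
  set x₂ : (Fin M → ℝ) × (Fin N → ℝ) :=
    (fun i => φ i + if Reach (Sum.inl i) then 0 else ε,
     fun j => ψ j - if Reach (Sum.inr j) then 0 else ε) with hx₂
  have h00 : Reach (Sum.inl 0) := SimpleGraph.Reachable.refl _
  have hx₁mem : x₁ ∈ dualPolyhedron C ∩ {p | p.1 0 = 0} := by
    constructor
    · intro i j
      simp only [hx₁]
      by_cases hi : Reach (Sum.inl i) <;> by_cases hj : Reach (Sum.inr j) <;>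
        simp only [hi, hj, if_pos, if_neg, if_true, if_false]
      · have := hmem i j; linarith
      · have := hεle i j (by tauto); linarith
      · have := hmem i j; linarith
      · have := hmem i j; linarith
    · simp only [hx₁, Set.mem_setOf_eq, if_pos h00]
      simpa using h0
  have hx₂mem : x₂ ∈ dualPolyhedron C ∩ {p | p.1 0 = 0} := by
    constructor
    · intro i j
      simp only [hx₂]
      by_cases hi : Reach (Sum.inl i) <;> by_cases hj : Reach (Sum.inr j) <;>
        simp only [hi, hj, if_pos, if_neg, if_true, if_false]
      · have := hmem i j; linarith
      · have := hmem i j; linarith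
      · have := hεle i j (by tauto); linarith
      · have := hmem i j; linarith
    · simp only [hx₂, Set.mem_setOf_eq, if_pos h00]
      simpa using h0
  -- (φ, ψ) is the midpoint
  have hmid : (φ, ψ) ∈ openSegment ℝ x₁ x₂ := by
    refine ⟨1/2, 1/2, by norm_num, by norm_num, by norm_num, ?_⟩
    simp only [hx₁, hx₂, Prod.smul_mk, Prod.mk_add_mk, Prod.mk.injEq]
    constructor <;> funext t <;> simp [Pi.add_apply, smul_eq_mul] <;> ring
  -- x₁ ≠ (φ, ψ)
  have hne : x₁ ≠ (φ, ψ) := by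
    obtain ⟨v, hv⟩ := hex
    intro h
    rcases v with i | j
    · have := congrFun (congrArg Prod.fst h) i
      simp only [hx₁, if_neg hv] at this
      linarith
    · have := congrFun (congrArg Prod.snd h) j
      simp only [hx₁, if_neg hv] at this
      linarith
  intro hext
  exact hne (hext.2 hx₁mem hx₂mem hmid)
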